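/- Let P occur in T at some position. If the LMS factorization of P (with sentinels) is P = P_1 ⋯ P_p with p > 2, then in the LMS factorization of T, the characters of this occurrence corresponding to P_2 ⋯ P_{p-1} are factorized identically: each P_x for 2 ≤ x ≤ p-1 is exactly an LMS factor of T at the corresponding position. -/

import Mathlib

private theorem stmt5_cons_lt_cons_iff {α : Type*} [LinearOrder α] {x y : α} {l m : List α} :
    x :: l < y :: m ↔ x < y ∨ (x = y ∧ l < m) := by
  show List.Lex _ _ _ ↔ _
  constructor
  · rintro (_ | _ | _)
    · exact Or.inl ‹_›
    · exact Or.inr ⟨rfl, ‹_›⟩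
  · rintro (h | ⟨rfl, h⟩)
    · exact List.Lex.rel h
    · exact List.Lex.cons h

/-- If `c :: v` compared with `v`, both padded by a sentinel `d` smaller than all involved
characters, gives `<`, then the comparison is decided before the sentinel is reached, so
padding with any other list `w` gives the same result. -/
private theorem stmt5_sentinel {α : Type*} [LinearOrder α] (d : α) :
    ∀ (v : List α) (c : α), (∀ x ∈ c :: v, d < x) →
      c :: (v ++ [d]) < v ++ [d] → ∀ w : List α, c :: (v ++ w) < v ++ w := by
  intro v
  induction v with
  | nil =>
      intro c hmem h w
      rcases stmt5_cons_lt_cons_iff.1 h with h' | ⟨rfl, h'⟩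
      · exact absurd h' (not_lt.2 (hmem c (by simp)).le)
      · exact absurd h' (fun hh => by cases hh)
  | cons y v' ih =>
      intro c hmem h w
      rcases stmt5_cons_lt_cons_iff.1 (h : c :: (y :: (v' ++ [d])) < y :: (v' ++ [d]))
        with h' | ⟨rfl, h'⟩
      · exact List.Lex.rel h'
      · refine List.Lex.cons (ih c (fun x hx => hmem x ?_) h' w)
        simp only [List.mem_cons] at hx ⊢
        tauto

theorem stmt5 {α : Type*} [LinearOrder α] (T P : List α) (d : α)
    (hd : ∀ x ∈ P, d < x) (q : ℕ) (hocc : P <+: T.drop q)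
    (a b : ℕ) (h1a : 1 ≤ a) (hab : a ≤ b) (hbm : b < P.length)
    (haS : (P ++ [d]).drop a < (P ++ [d]).drop (a + 1) ∧
           (P ++ [d]).drop a < (P ++ [d]).drop (a - 1))
    (hbS : (P ++ [d]).drop b < (P ++ [d]).drop (b + 1) ∧
           (P ++ [d]).drop b < (P ++ [d]).drop (b - 1)) :
    ∀ k, a ≤ k → k ≤ b →
      (((P ++ [d]).drop k < (P ++ [d]).drop (k + 1) ∧
        (P ++ [d]).drop k < (P ++ [d]).drop (k - 1)) ↔
       (T.drop (q + k) < T.drop (q + k + 1) ∧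
        T.drop (q + k) < T.drop (q + k - 1))) := by
  obtain ⟨R, hR⟩ := hocc
  have h1b : 1 ≤ b := le_trans h1a hab
  -- dropping within the occurrence
  have hdT : ∀ i, i ≤ P.length → T.drop (q + i) = P.drop i ++ R := by
    intro i hi
    have h1 : T.drop (q + i) = (T.drop q).drop i := by rw [List.drop_drop, Nat.add_comm]
    rw [h1, ← hR, List.drop_append_of_le_length hi]
  have hdQ : ∀ i, i ≤ P.length → (P ++ [d]).drop i = P.drop i ++ [d] := by
    intro i hi
    rw [List.drop_append_of_le_length hi]
  -- peeling off one character
  have fQ : ∀ i, (hi : i < P.length) →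
      (P ++ [d]).drop i = P[i] :: (P ++ [d]).drop (i + 1) := by
    intro i hi
    rw [hdQ i hi.le, hdQ (i + 1) hi, List.drop_eq_getElem_cons hi, List.cons_append]
  have fT : ∀ i, (hi : i < P.length) →
      T.drop (q + i) = P[i] :: T.drop (q + (i + 1)) := by
    intro i hi
    rw [hdT i hi.le, hdT (i + 1) hi, List.drop_eq_getElem_cons hi, List.cons_append]
  have hb1 : b - 1 < P.length := lt_of_le_of_lt (Nat.sub_le _ _) hbm
  have hb1' : b - 1 + 1 = b := Nat.sub_add_cancel h1b
  have eQb1 : (P ++ [d]).drop (b - 1) = P[b - 1] :: (P ++ [d]).drop b := by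
    rw [fQ (b - 1) hb1, hb1']
  -- the character before `b` is strictly bigger
  have hbgt : P[b] < P[b - 1] := by
    have h2 := hbS.2
    have h1 := hbS.1
    rw [eQb1, fQ b hbm] at h2
    rw [fQ b hbm] at h1
    rcases stmt5_cons_lt_cons_iff.1 h2 with h' | ⟨he, h'⟩
    · exact h'
    · exact absurd h' (asymm h1)
  -- base case for the forward ("type S") comparison, in T
  have bT : T.drop (q + b) < T.drop (q + b + 1) := by
    have hmem : ∀ x ∈ P[b] :: P.drop (b + 1), d < x := by
      intro x hx
      apply hd
      rcases List.mem_cons.mp hx with rfl | hx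
      · exact List.getElem_mem hbm
      · exact List.mem_of_mem_drop hx
    have hyp : P[b] :: (P.drop (b + 1) ++ [d]) < P.drop (b + 1) ++ [d] := by
      have h1 := hbS.1
      rw [fQ b hbm, hdQ (b + 1) hbm] at h1
      exact h1
    have e : q + b + 1 = q + (b + 1) := by omega
    rw [fT b hbm, e, hdT (b + 1) hbm]
    exact stmt5_sentinel d (P.drop (b + 1)) P[b] hmem hyp R
  -- base case for the backward ("type L") comparison, in T
  have bT' : T.drop (q + b) < T.drop (q + b - 1) := by
    have e : q + b - 1 = q + (b - 1) := by omega
    rw [e, fT (b - 1) hb1, hb1', fT b hbm]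
    exact stmt5_cons_lt_cons_iff.2 (Or.inl hbgt)
  -- forward comparisons agree, by downward induction from b
  have C1 : ∀ j, ((P ++ [d]).drop (b - j) < (P ++ [d]).drop (b - j + 1) ↔
      T.drop (q + (b - j)) < T.drop (q + (b - j) + 1)) := by
    intro j
    induction j with
    | zero => simpa using iff_of_true hbS.1 bT
    | succ j ih =>
        by_cases hj : j < b
        · set k := b - (j + 1) with hk
          have hk1 : k < P.length := by omega
          have hk2 : k + 1 < P.length := by omega
          have ihk := ih
          rw [show b - j = k + 1 by omega,
            show q + (k + 1) + 1 = q + (k + 1 + 1) by omega,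
            fQ (k + 1) hk2, fT (k + 1) hk2] at ihk
          rw [show q + k + 1 = q + (k + 1) by omega,
            fQ k hk1, fQ (k + 1) hk2, fT k hk1, fT (k + 1) hk2,
            stmt5_cons_lt_cons_iff, stmt5_cons_lt_cons_iff, ihk]
        · have e : b - (j + 1) = b - j := by omega
          rw [e]; exact ih
  -- backward comparisons agree, by downward induction from b
  have C2 : ∀ j, j ≤ b - 1 → ((P ++ [d]).drop (b - j) < (P ++ [d]).drop (b - j - 1) ↔
      T.drop (q + (b - j)) < T.drop (q + (b - j) - 1)) := by
    intro j
    induction j with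
    | zero => intro _; simpa using iff_of_true hbS.2 bT'
    | succ j ih =>
        intro hjb
        have ihk := ih (by omega)
        set k := b - (j + 1) with hk
        have hk1 : 1 ≤ k := by omega
        have hkn : k < P.length := by omega
        have hk1n : k - 1 < P.length := by omega
        have hk1' : k - 1 + 1 = k := by omega
        rw [show b - j = k + 1 by omega, show k + 1 - 1 = k by omega,
          show q + (k + 1) - 1 = q + k by omega,
          fQ k hkn, fT k hkn] at ihk
        rw [show q + k - 1 = q + (k - 1) by omega,
          fQ (k - 1) hk1n, fT (k - 1) hk1n, hk1',
          fQ k hkn, fT k hkn,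
          stmt5_cons_lt_cons_iff, stmt5_cons_lt_cons_iff, ihk]
  -- combine
  intro k hak hkb
  have F := C1 (b - k)
  have B := C2 (b - k) (by omega)
  rw [show b - (b - k) = k by omega] at F B
  exact and_congr F B
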